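/- (Separability criterion, part 1) With the sequence γ_N defined by the map A_{N+1}=B_{N+1}=A_N − Re(X_N), C_{N+1}=−Im(X_N), X_N = C_N(B_N − iJ)⁻C_Nᵀ: if for some N ≥ 1 one has A_N − iJₙ not positive semidefinite, then γ_0 is not separable (there exist no CMs γ_A, γ_B with γ_0 ≥ γ_A ⊕ γ_B). -/

import Mathlib

open Matrix
open scoped Classical ComplexOrder

noncomputable section

/-- Embed a real matrix into the complex matrices. -/
def toC {k l : ℕ} (A : Matrix (Fin k) (Fin l) ℝ) : Matrix (Fin k) (Fin l) ℂ :=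
  A.map Complex.ofReal

/-- The standard symplectic form `Jₙ = ⊕ₖ [[0,-1],[1,0]]` on `ℝ^{2n}`. -/
def J (n : ℕ) : Matrix (Fin (2*n)) (Fin (2*n)) ℝ :=
  Matrix.of fun i j =>
    if i.val + 1 = j.val ∧ i.val % 2 = 0 then -1
    else if j.val + 1 = i.val ∧ j.val % 2 = 0 then 1 else 0

/-- A correlation matrix (CM): a real symmetric `2n×2n` matrix with `γ - iJₙ ≥ 0`. -/
def IsCM {n : ℕ} (γ : Matrix (Fin (2*n)) (Fin (2*n)) ℝ) : Prop :=
  γ.IsSymm ∧ (toC γ - Complex.I • toC (J n)).PosSemidef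

/-- The operator norm (largest singular value) of a real matrix. -/
def opNorm {n m : ℕ} (C : Matrix (Fin n) (Fin m) ℝ) : ℝ :=
  ‖(Matrix.toEuclideanLin (𝕜 := ℝ) C).toContinuousLinearMap‖

/-- The square root of a positive semidefinite matrix (the former `Matrix.PosSemidef.sqrt`). -/
def psdSqrt {𝕜 : Type*} [RCLike 𝕜] {k : Type*} [Fintype k] [DecidableEq k]
    {A : Matrix k k 𝕜} (hA : A.PosSemidef) : Matrix k k 𝕜 :=
  (hA.1.eigenvectorUnitary : Matrix k k 𝕜) * diagonal ((↑) ∘ Real.sqrt ∘ hA.1.eigenvalues) *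
    (star hA.1.eigenvectorUnitary : Matrix k k 𝕜)

/-- The trace norm (sum of singular values) of a real square matrix. -/
def trNorm {k : ℕ} (A : Matrix (Fin k) (Fin k) ℝ) : ℝ :=
  (psdSqrt (Matrix.posSemidef_conjTranspose_mul_self A)).trace

/-- The trace norm of a complex square matrix. -/
def trNormC {k : ℕ} (A : Matrix (Fin k) (Fin k) ℂ) : ℝ :=
  ((psdSqrt (Matrix.posSemidef_conjTranspose_mul_self A)).trace).re

/-- The Moore–Penrose pseudoinverse of a real matrix. -/
def pinvR {n m : ℕ} (A : Matrix (Fin n) (Fin m) ℝ) : Matrix (Fin m) (Fin n) ℝ :=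
  if h : ∃ B : Matrix (Fin m) (Fin n) ℝ,
      A * B * A = A ∧ B * A * B = B ∧ (A * B)ᵀ = A * B ∧ (B * A)ᵀ = B * A
  then h.choose else 0

/-- The Moore–Penrose pseudoinverse of a complex matrix. -/
def pinvC {n m : ℕ} (A : Matrix (Fin n) (Fin m) ℂ) : Matrix (Fin m) (Fin n) ℂ :=
  if h : ∃ B : Matrix (Fin m) (Fin n) ℂ,
      A * B * A = A ∧ B * A * B = B ∧ (A * B)ᴴ = A * B ∧ (B * A)ᴴ = B * A
  then h.choose else 0

/-- Real part of a complex matrix. -/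
def reM {k l : ℕ} (X : Matrix (Fin k) (Fin l) ℂ) : Matrix (Fin k) (Fin l) ℝ :=
  Matrix.of fun i j => (X i j).re

/-- Imaginary part of a complex matrix. -/
def imM {k l : ℕ} (X : Matrix (Fin k) (Fin l) ℂ) : Matrix (Fin k) (Fin l) ℝ :=
  Matrix.of fun i j => (X i j).im

/-- `X = C (B − iJₘ)⁻ Cᵀ` appearing in the nonlinear map. -/
def Xmap {n m : ℕ} (B : Matrix (Fin (2*m)) (Fin (2*m)) ℝ)
    (C : Matrix (Fin (2*n)) (Fin (2*m)) ℝ) : Matrix (Fin (2*n)) (Fin (2*n)) ℂ :=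
  toC C * pinvC (toC B - Complex.I • toC (J m)) * toC Cᵀ

/-- `A_{N+1} = A_N − Re(X_N)`. -/
def nextA {n m : ℕ} (A : Matrix (Fin (2*n)) (Fin (2*n)) ℝ)
    (B : Matrix (Fin (2*m)) (Fin (2*m)) ℝ) (C : Matrix (Fin (2*n)) (Fin (2*m)) ℝ) :
    Matrix (Fin (2*n)) (Fin (2*n)) ℝ :=
  A - reM (Xmap B C)

/-- `C_{N+1} = −Im(X_N)`. -/
def nextC {n m : ℕ} (B : Matrix (Fin (2*m)) (Fin (2*m)) ℝ)
    (C : Matrix (Fin (2*n)) (Fin (2*m)) ℝ) : Matrix (Fin (2*n)) (Fin (2*n)) ℝ :=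
  - imM (Xmap B C)

/-- CM predicate for a bipartite block-indexed real matrix, w.r.t. `Jₙ ⊕ Jₘ`. -/
def IsCM2 {n m : ℕ} (γ : Matrix (Fin (2*n) ⊕ Fin (2*m)) (Fin (2*n) ⊕ Fin (2*m)) ℝ) : Prop :=
  γ.IsSymm ∧ (γ.map Complex.ofReal -
    Complex.I • (fromBlocks (J n) 0 0 (J m)).map Complex.ofReal).PosSemidef

/-- Separability of a bipartite CM: `γ ≥ γ_A ⊕ γ_B` for some CMs `γ_A, γ_B`. -/
def SepCM {n m : ℕ} (γ : Matrix (Fin (2*n) ⊕ Fin (2*m)) (Fin (2*n) ⊕ Fin (2*m)) ℝ) : Prop :=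
  ∃ (γA : Matrix (Fin (2*n)) (Fin (2*n)) ℝ) (γB : Matrix (Fin (2*m)) (Fin (2*m)) ℝ),
    IsCM γA ∧ IsCM γB ∧ (γ - fromBlocks γA 0 0 γB).PosSemidef

/-- The block matrix `[[A, C],[Cᵀ, A]]` built from the pair `(A, C)`. -/
def γmat {n : ℕ} (p : Matrix (Fin (2*n)) (Fin (2*n)) ℝ × Matrix (Fin (2*n)) (Fin (2*n)) ℝ) :
    Matrix (Fin (2*n) ⊕ Fin (2*n)) (Fin (2*n) ⊕ Fin (2*n)) ℝ :=
  fromBlocks p.1 p.2 p.2ᵀ p.1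

/-- The iterated sequence: `seq A0 B0 C0 N = (A_{N+1}, C_{N+1})`; the map gives `0`
whenever the current matrix is not a CM. -/
def seq {n m : ℕ} (A0 : Matrix (Fin (2*n)) (Fin (2*n)) ℝ)
    (B0 : Matrix (Fin (2*m)) (Fin (2*m)) ℝ) (C0 : Matrix (Fin (2*n)) (Fin (2*m)) ℝ) :
    ℕ → Matrix (Fin (2*n)) (Fin (2*n)) ℝ × Matrix (Fin (2*n)) (Fin (2*n)) ℝ
  | 0 => if IsCM2 (fromBlocks A0 C0 C0ᵀ B0) then (nextA A0 B0 C0, nextC B0 C0) else (0, 0)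
  | (N+1) => if IsCM2 (γmat (seq A0 B0 C0 N)) then
      (nextA (seq A0 B0 C0 N).1 (seq A0 B0 C0 N).1 (seq A0 B0 C0 N).2,
       nextC (seq A0 B0 C0 N).1 (seq A0 B0 C0 N).2)
    else (0, 0)

/-! ### Auxiliary lemmas for the proof -/

section AuxGeneric

variable {α β : Type*} [Fintype α] [DecidableEq α] [Fintype β] [DecidableEq β]

/-- A real positive semidefinite matrix is complex positive semidefinite. -/
lemma posSemidef_map_ofReal' {M : Matrix α α ℝ} (hM : M.PosSemidef) :
    (M.map Complex.ofReal).PosSemidef := by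
  obtain ⟨k, v, rfl⟩ := Matrix.posSemidef_iff_eq_sum_vecMulVec.mp hM
  have h : (∑ i, vecMulVec (v i) (star (v i))).map Complex.ofReal =
      ∑ i, vecMulVec (fun j => (v i j : ℂ)) (star (fun j => (v i j : ℂ))) := by
    ext a b
    simp [Matrix.sum_apply, vecMulVec_apply]
  rw [h]
  exact Matrix.posSemidef_sum _ fun i _ => Matrix.posSemidef_vecMulVec_self_star _

/-- Star of a `Sum.elim`. -/
lemma star_sum_elim (v : α → ℂ) (w : β → ℂ) :
    star (Sum.elim v w) = Sum.elim (star v) (star w) := by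
  funext i; cases i <;> rfl

/-- Block diagonal PSD matrices. -/
lemma fromBlocks_diag_posSemidef {D1 : Matrix α α ℂ} {D2 : Matrix β β ℂ}
    (h1 : D1.PosSemidef) (h2 : D2.PosSemidef) :
    (Matrix.fromBlocks D1 0 0 D2).PosSemidef := by
  refine Matrix.PosSemidef.of_dotProduct_mulVec_nonneg ?_ ?_
  · show _ = _
    rw [Matrix.fromBlocks_conjTranspose, h1.1.eq, h2.1.eq]
    simp
  · intro x
    have hx : x = Sum.elim (x ∘ Sum.inl) (x ∘ Sum.inr) := by funext i; cases i <;> rfl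
    rw [hx, Matrix.fromBlocks_mulVec, star_sum_elim, sumElim_dotProduct_sumElim]
    simp only [Matrix.zero_mulVec, add_zero, zero_add]
    exact add_nonneg (h1.dotProduct_mulVec_nonneg _) (h2.dotProduct_mulVec_nonneg _)

/-- Uniqueness of the Moore–Penrose pseudoinverse. -/
lemma mp_unique' {A : Matrix α β ℂ} {B C : Matrix β α ℂ}
    (hB1 : A * B * A = A) (hB2 : B * A * B = B) (hB3 : (A * B)ᴴ = A * B) (hB4 : (B * A)ᴴ = B * A)
    (hC1 : A * C * A = A) (hC2 : C * A * C = C) (hC3 : (A * C)ᴴ = A * C) (hC4 : (C * A)ᴴ = C * A) :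
    B = C := by
  have hAB : A * B = A * C := by
    calc A * B = (A * B)ᴴ := hB3.symm
    _ = Bᴴ * Aᴴ := by rw [Matrix.conjTranspose_mul]
    _ = Bᴴ * (A * C * A)ᴴ := by rw [hC1]
    _ = Bᴴ * (Aᴴ * (Cᴴ * Aᴴ)) := by rw [Matrix.conjTranspose_mul, Matrix.conjTranspose_mul]
    _ = (Bᴴ * Aᴴ) * (Cᴴ * Aᴴ) := by rw [Matrix.mul_assoc]
    _ = (A * B)ᴴ * (A * C)ᴴ := by
        rw [Matrix.conjTranspose_mul A B, Matrix.conjTranspose_mul A C]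
    _ = (A * B) * (A * C) := by rw [hB3, hC3]
    _ = ((A * B) * A) * C := by rw [Matrix.mul_assoc (A * B) A C]
    _ = A * C := by rw [hB1]
  have hBA : B * A = C * A := by
    calc B * A = (B * A)ᴴ := hB4.symm
    _ = Aᴴ * Bᴴ := by rw [Matrix.conjTranspose_mul]
    _ = (A * C * A)ᴴ * Bᴴ := by rw [hC1]
    _ = (Aᴴ * (Cᴴ * Aᴴ)) * Bᴴ := by rw [Matrix.conjTranspose_mul, Matrix.conjTranspose_mul]
    _ = ((Aᴴ * Cᴴ) * Aᴴ) * Bᴴ := by rw [Matrix.mul_assoc Aᴴ Cᴴ Aᴴ]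
    _ = ((C * A)ᴴ * Aᴴ) * Bᴴ := by rw [Matrix.conjTranspose_mul C A]
    _ = (C * A) * (Aᴴ * Bᴴ) := by rw [hC4, Matrix.mul_assoc]
    _ = (C * A) * (B * A)ᴴ := by rw [Matrix.conjTranspose_mul]
    _ = (C * A) * (B * A) := by rw [hB4]
    _ = C * (A * (B * A)) := by rw [Matrix.mul_assoc C A (B * A)]
    _ = C * (A * B * A) := by rw [Matrix.mul_assoc A B A]
    _ = C * A := by rw [hB1]
  calc B = B * A * B := hB2.symm
  _ = C * A * B := by rw [hBA]
  _ = C * (A * B) := by rw [Matrix.mul_assoc]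
  _ = C * (A * C) := by rw [hAB]
  _ = C * A * C := by rw [Matrix.mul_assoc]
  _ = C := hC2

/-- Schur complement bound: if `[[P, C],[Cᴴ, Q]] ≥ 0` and `B` is Hermitian with
`B Q B = B`, then `P - C B Cᴴ ≥ 0`. -/
lemma schur_psd {P : Matrix α α ℂ} {C : Matrix α β ℂ} {Q B : Matrix β β ℂ}
    (hB : Bᴴ = B) (hBQB : B * Q * B = B)
    (hM : (Matrix.fromBlocks P C Cᴴ Q).PosSemidef) :
    (P - C * B * Cᴴ).PosSemidef := by
  set L : Matrix (α ⊕ β) (α ⊕ β) ℂ := Matrix.fromBlocks 1 0 (-(B * Cᴴ)) 1 with hL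
  have hpsd := hM.conjTranspose_mul_mul_same L
  have hLH : Lᴴ = Matrix.fromBlocks 1 (-(B * Cᴴ))ᴴ 0 1 := by
    rw [hL, Matrix.fromBlocks_conjTranspose]
    congr 1 <;> simp
  have hLH2 : (-(B * Cᴴ))ᴴ = -(C * B) := by
    rw [Matrix.conjTranspose_neg, Matrix.conjTranspose_mul, hB, Matrix.conjTranspose_conjTranspose]
  have hBQB' : B * (Q * (B * Cᴴ)) = B * Cᴴ := by
    have h := congrArg (· * Cᴴ) hBQB
    simpa [Matrix.mul_assoc] using h
  have key : Lᴴ * (Matrix.fromBlocks P C Cᴴ Q) * L =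
      Matrix.fromBlocks (P - C * B * Cᴴ) (C - C * (B * Q)) (Cᴴ - Q * (B * Cᴴ)) Q := by
    rw [hLH, hLH2, Matrix.mul_assoc, Matrix.fromBlocks_multiply, Matrix.fromBlocks_multiply]
    congr 1 <;>
      simp only [Matrix.one_mul, Matrix.mul_one, Matrix.zero_mul, Matrix.mul_zero,
        Matrix.neg_mul, Matrix.mul_neg, Matrix.mul_add, Matrix.mul_sub, Matrix.sub_mul,
        Matrix.add_mul, add_zero, zero_add, Matrix.mul_assoc, hBQB'] <;>
      abel
  rw [key] at hpsd
  have hsub := hpsd.submatrix (Sum.inl : α → α ⊕ β)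
  have hsubeq : (Matrix.fromBlocks (P - C * B * Cᴴ) (C - C * (B * Q))
      (Cᴴ - Q * (B * Cᴴ)) Q).submatrix (Sum.inl : α → α ⊕ β) Sum.inl = P - C * B * Cᴴ := rfl
  rwa [hsubeq] at hsub

/-- Combining lemma: if `P ± iK ≥ 0` then `[[P, K],[-K, P]] ≥ 0`. -/
lemma fromBlocks_psd_of_pm {P K : Matrix α α ℂ} (hP : Pᴴ = P) (hK : Kᴴ = -K)
    (h1 : (P + Complex.I • K).PosSemidef) (h2 : (P - Complex.I • K).PosSemidef) :
    (Matrix.fromBlocks P K (-K) P).PosSemidef := by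
  set T : Matrix (α ⊕ α) (α ⊕ α) ℂ :=
    Matrix.fromBlocks 1 (-(Complex.I • 1)) 1 (Complex.I • 1) with hT
  have hTH : Tᴴ = Matrix.fromBlocks 1 1 (Complex.I • 1) (-(Complex.I • 1)) := by
    rw [hT, Matrix.fromBlocks_conjTranspose]
    congr 1 <;>
      simp [Matrix.conjTranspose_smul, Complex.conj_I, Matrix.conjTranspose_neg, neg_smul]
  have hD : (Matrix.fromBlocks (P + Complex.I • K) 0 0 (P - Complex.I • K)).PosSemidef :=
    fromBlocks_diag_posSemidef h1 h2
  have hpsd := hD.conjTranspose_mul_mul_same T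
  have key : Tᴴ * (Matrix.fromBlocks (P + Complex.I • K) 0 0 (P - Complex.I • K)) * T =
      (2 : ℂ) • Matrix.fromBlocks P K (-K) P := by
    rw [hTH, hT, Matrix.mul_assoc, Matrix.fromBlocks_multiply, Matrix.fromBlocks_multiply,
      Matrix.fromBlocks_smul]
    congr 1 <;>
      simp only [Matrix.one_mul, Matrix.mul_one, Matrix.zero_mul, Matrix.mul_zero,
        Matrix.neg_mul, Matrix.mul_neg, Matrix.smul_mul, Matrix.mul_smul, add_zero, zero_add,
        smul_add, smul_sub, smul_smul, Complex.I_mul_I, smul_neg, neg_smul, one_smul, neg_neg,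
        neg_one_smul, two_smul] <;>
      abel
  rw [key] at hpsd
  refine Matrix.PosSemidef.of_dotProduct_mulVec_nonneg ?_ ?_
  · show _ = _
    rw [Matrix.fromBlocks_conjTranspose, hP, hK, Matrix.conjTranspose_neg, hK, neg_neg]
  · intro x
    have h := hpsd.dotProduct_mulVec_nonneg x
    rw [Matrix.smul_mulVec, dotProduct_smul, smul_eq_mul] at h
    have h05 : (0 : ℂ) ≤ ((2⁻¹ : ℝ) : ℂ) := by
      rw [Complex.zero_le_real]; norm_num
    have := mul_nonneg h05 h
    have heq : ((2⁻¹ : ℝ) : ℂ) * ((2 : ℂ) * (star x ⬝ᵥ (Matrix.fromBlocks P K (-K) P) *ᵥ x)) =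
        star x ⬝ᵥ (Matrix.fromBlocks P K (-K) P) *ᵥ x := by
      push_cast
      ring
    rwa [heq] at this

end AuxGeneric

section AuxSpecific

/-- `pinvC Q * Q * pinvC Q = pinvC Q` unconditionally. -/
lemma pinvC_mul_self {k l : ℕ} (Q : Matrix (Fin k) (Fin l) ℂ) :
    pinvC Q * Q * pinvC Q = pinvC Q := by
  unfold pinvC
  split_ifs with h
  · exact h.choose_spec.2.1
  · simp

/-- The pseudoinverse of a Hermitian matrix is Hermitian. -/
lemma pinvC_herm {k : ℕ} {Q : Matrix (Fin k) (Fin k) ℂ} (hQ : Qᴴ = Q) :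
    (pinvC Q)ᴴ = pinvC Q := by
  unfold pinvC
  split_ifs with h
  · obtain ⟨h1, h2, h3, h4⟩ := h.choose_spec
    set B := h.choose with hBdef
    refine mp_unique' (A := Q) (B := Bᴴ) ?_ ?_ ?_ ?_ h1 h2 h3 h4
    · calc Q * Bᴴ * Q = (Qᴴ * B * Qᴴ)ᴴ := by
            rw [Matrix.conjTranspose_mul, Matrix.conjTranspose_mul]
            simp [Matrix.mul_assoc]
      _ = (Q * B * Q)ᴴ := by rw [hQ]
      _ = Qᴴ := by rw [h1]
      _ = Q := hQ
    · calc Bᴴ * Q * Bᴴ = (B * Qᴴ * B)ᴴ := by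
            rw [Matrix.conjTranspose_mul, Matrix.conjTranspose_mul]
            simp [Matrix.mul_assoc]
      _ = (B * Q * B)ᴴ := by rw [hQ]
      _ = Bᴴ := by rw [h2]
    · calc (Q * Bᴴ)ᴴ = B * Qᴴ := by rw [Matrix.conjTranspose_mul]; simp
      _ = B * Q := by rw [hQ]
      _ = (B * Q)ᴴ := h4.symm
      _ = Qᴴ * Bᴴ := by rw [Matrix.conjTranspose_mul]
      _ = Q * Bᴴ := by rw [hQ]
    · calc (Bᴴ * Q)ᴴ = Qᴴ * B := by rw [Matrix.conjTranspose_mul]; simp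
      _ = Q * B := by rw [hQ]
      _ = (Q * B)ᴴ := h3.symm
      _ = Bᴴ * Qᴴ := by rw [Matrix.conjTranspose_mul]
      _ = Bᴴ * Q := by rw [hQ]
  · simp

/-- `toC` and transpose. -/
lemma toC_transpose {k l : ℕ} (A : Matrix (Fin k) (Fin l) ℝ) : toC Aᵀ = (toC A)ᵀ := rfl

lemma toC_conjT {k l : ℕ} (A : Matrix (Fin k) (Fin l) ℝ) : (toC A)ᴴ = toC Aᵀ := by
  ext i j
  simp [toC, Matrix.conjTranspose_apply]

lemma toC_neg {k l : ℕ} (A : Matrix (Fin k) (Fin l) ℝ) : toC (-A) = -toC A := by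
  ext i j
  simp [toC]

/-- `J` is antisymmetric. -/
lemma J_trans (k : ℕ) : (_root_.J k)ᵀ = -(_root_.J k) := by
  ext i j
  simp only [Matrix.transpose_apply, Matrix.neg_apply, _root_.J, Matrix.of_apply]
  split_ifs <;> first | omega | norm_num

/-- Hermiticity of `A - iJ` for symmetric `A`. -/
lemma herm_AiJ {k : ℕ} {A : Matrix (Fin (2*k)) (Fin (2*k)) ℝ} (hA : A.IsSymm) :
    (toC A - Complex.I • toC (_root_.J k))ᴴ = toC A - Complex.I • toC (_root_.J k) := by
  rw [Matrix.conjTranspose_sub, Matrix.conjTranspose_smul, toC_conjT, toC_conjT, hA.eq,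
    J_trans, toC_neg, Complex.star_def, Complex.conj_I, neg_smul, smul_neg, neg_neg]

/-- `Xmap` is Hermitian. -/
lemma Xmap_herm {n m : ℕ} {B : Matrix (Fin (2*m)) (Fin (2*m)) ℝ} (hB : B.IsSymm)
    (C : Matrix (Fin (2*n)) (Fin (2*m)) ℝ) : (Xmap B C)ᴴ = Xmap B C := by
  unfold Xmap
  have hp := pinvC_herm (herm_AiJ hB)
  rw [Matrix.conjTranspose_mul, Matrix.conjTranspose_mul, hp, toC_conjT, toC_conjT,
    Matrix.transpose_transpose, Matrix.mul_assoc]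

lemma reM_symm {k : ℕ} {X : Matrix (Fin k) (Fin k) ℂ} (hX : Xᴴ = X) :
    (reM X)ᵀ = reM X := by
  ext i j
  have h := congrFun (congrFun hX i) j
  simp only [Matrix.conjTranspose_apply] at h
  show (X j i).re = (X i j).re
  rw [← h]
  simp [Complex.star_def]

lemma imM_antisymm {k : ℕ} {X : Matrix (Fin k) (Fin k) ℂ} (hX : Xᴴ = X) :
    (imM X)ᵀ = -(imM X) := by
  ext i j
  have h := congrFun (congrFun hX i) j
  simp only [Matrix.conjTranspose_apply] at h
  show (X j i).im = -(X i j).im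
  rw [← h]
  simp [Complex.star_def]

/-- The key entrywise identity. -/
lemma key_eq {k : ℕ} (A γA : Matrix (Fin k) (Fin k) ℝ) (X : Matrix (Fin k) (Fin k) ℂ) :
    toC (A - reM X) - toC γA + Complex.I • toC (-(imM X)) = toC A - toC γA - X := by
  ext i j
  simp only [toC, reM, imM, Matrix.map_apply, Matrix.sub_apply, Matrix.add_apply,
    Matrix.smul_apply, Matrix.neg_apply, Matrix.of_apply, smul_eq_mul]
  have hx := Complex.re_add_im (X i j)
  push_cast
  linear_combination -hx

/-- The invariant. -/
def Good {n : ℕ} (γA : Matrix (Fin (2*n)) (Fin (2*n)) ℝ)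
    (p : Matrix (Fin (2*n)) (Fin (2*n)) ℝ × Matrix (Fin (2*n)) (Fin (2*n)) ℝ) : Prop :=
  p.1.IsSymm ∧ p.2ᵀ = -p.2 ∧ (toC p.1 - toC γA + Complex.I • toC p.2).PosSemidef

lemma good_transpose {n : ℕ} {γA A C : Matrix (Fin (2*n)) (Fin (2*n)) ℝ}
    (hA : A.IsSymm) (hγ : γA.IsSymm) (hC : Cᵀ = -C)
    (h : (toC A - toC γA + Complex.I • toC C).PosSemidef) :
    (toC A - toC γA - Complex.I • toC C).PosSemidef := by
  have ht := h.transpose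
  rwa [Matrix.transpose_add, Matrix.transpose_sub, Matrix.transpose_smul,
    ← toC_transpose, ← toC_transpose, ← toC_transpose, hA.eq, hγ.eq, hC, toC_neg,
    smul_neg, ← sub_eq_add_neg] at ht

/-- From the invariant, `γmat p` is a CM w.r.t. `J ⊕ J`. -/
lemma good_cm2 {n : ℕ} {γA : Matrix (Fin (2*n)) (Fin (2*n)) ℝ} (hγA : IsCM γA)
    {p : Matrix (Fin (2*n)) (Fin (2*n)) ℝ × Matrix (Fin (2*n)) (Fin (2*n)) ℝ}
    (hp : Good γA p) : IsCM2 (γmat p) := by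
  obtain ⟨hs, hc, hpsd⟩ := hp
  constructor
  · rw [γmat, Matrix.isSymm_fromBlocks_iff]
    exact ⟨hs, rfl, Matrix.transpose_transpose _, hs⟩
  · have hrw : (γmat p).map Complex.ofReal -
        Complex.I • (Matrix.fromBlocks (_root_.J n) 0 0 (_root_.J n)).map Complex.ofReal =
        Matrix.fromBlocks (toC p.1 - Complex.I • toC (_root_.J n)) (toC p.2) (-(toC p.2))
          (toC p.1 - Complex.I • toC (_root_.J n)) := by
      have hc' : ∀ i j, p.2 j i = - p.2 i j := fun i j => by
        have h := congrFun (congrFun hc i) j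
        simpa using h
      ext i j
      rcases i with i | i <;> rcases j with j | j <;>
        (simp only [γmat, toC, Matrix.sub_apply, Matrix.map_apply, Matrix.smul_apply,
          Matrix.fromBlocks_apply₁₁, Matrix.fromBlocks_apply₁₂, Matrix.fromBlocks_apply₂₁,
          Matrix.fromBlocks_apply₂₂, Matrix.neg_apply, Matrix.transpose_apply,
          Matrix.zero_apply, smul_eq_mul, mul_zero, sub_zero] <;>
          (try rw [hc' i j]) <;> push_cast <;> ring)
    rw [hrw]
    have hP : (toC p.1 - Complex.I • toC (_root_.J n))ᴴ = toC p.1 - Complex.I • toC (_root_.J n) :=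
      herm_AiJ hs
    have hK : (toC p.2)ᴴ = -(toC p.2) := by rw [toC_conjT, hc, toC_neg]
    refine fromBlocks_psd_of_pm hP hK ?_ ?_
    · have he : (toC p.1 - toC γA + Complex.I • toC p.2) + (toC γA - Complex.I • toC (_root_.J n)) =
          (toC p.1 - Complex.I • toC (_root_.J n)) + Complex.I • toC p.2 := by abel
      have := hpsd.add hγA.2
      rwa [he] at this
    · have h2 := good_transpose hs hγA.1 hc hpsd
      have he : (toC p.1 - toC γA - Complex.I • toC p.2) + (toC γA - Complex.I • toC (_root_.J n)) =
          (toC p.1 - Complex.I • toC (_root_.J n)) - Complex.I • toC p.2 := by abel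
      have := h2.add hγA.2
      rwa [he] at this

/-- Extract the `A - iJ ≥ 0` statement from the CM2 property. -/
lemma cm2_block {n : ℕ}
    {p : Matrix (Fin (2*n)) (Fin (2*n)) ℝ × Matrix (Fin (2*n)) (Fin (2*n)) ℝ}
    (h : IsCM2 (γmat p)) : (toC p.1 - Complex.I • toC (_root_.J n)).PosSemidef := by
  have hsub := h.2.submatrix (Sum.inl : Fin (2*n) → Fin (2*n) ⊕ Fin (2*n))
  have heq : ((γmat p).map Complex.ofReal -
      Complex.I • (Matrix.fromBlocks (_root_.J n) 0 0 (_root_.J n)).map Complex.ofReal).submatrix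
      (Sum.inl : Fin (2*n) → Fin (2*n) ⊕ Fin (2*n)) Sum.inl =
      toC p.1 - Complex.I • toC (_root_.J n) := by
    ext i j
    simp [γmat, toC, Matrix.submatrix_apply, Matrix.map_apply, Matrix.sub_apply,
      Matrix.smul_apply, Matrix.fromBlocks]
  rwa [heq] at hsub

/-- The induction step. -/
lemma good_step {n : ℕ} {γA : Matrix (Fin (2*n)) (Fin (2*n)) ℝ} (hγA : IsCM γA)
    {A C : Matrix (Fin (2*n)) (Fin (2*n)) ℝ} (h : Good γA (A, C)) :
    Good γA (nextA A A C, nextC A C) := by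
  obtain ⟨hs, hc, hpsd⟩ := h
  have hXH : (Xmap A C)ᴴ = Xmap A C := Xmap_herm hs C
  have hQH : (toC A - Complex.I • toC (_root_.J n))ᴴ = toC A - Complex.I • toC (_root_.J n) := herm_AiJ hs
  have hKH : (toC C)ᴴ = -(toC C) := by rw [toC_conjT, hc, toC_neg]
  -- the block matrix is PSD
  have hblock : (Matrix.fromBlocks (toC A - toC γA) (toC C) ((toC C)ᴴ)
      (toC A - Complex.I • toC (_root_.J n))).PosSemidef := by
    have hP : (toC A - toC γA)ᴴ = toC A - toC γA := by
      rw [Matrix.conjTranspose_sub, toC_conjT, toC_conjT, hs.eq, hγA.1.eq]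
    have hb1 : (Matrix.fromBlocks (toC A - toC γA) (toC C) (-(toC C))
        (toC A - toC γA)).PosSemidef :=
      fromBlocks_psd_of_pm hP hKH hpsd (good_transpose hs hγA.1 hc hpsd)
    have hb2 : (Matrix.fromBlocks (0 : Matrix (Fin (2*n)) (Fin (2*n)) ℂ) 0 0
        (toC γA - Complex.I • toC (_root_.J n))).PosSemidef :=
      fromBlocks_diag_posSemidef Matrix.PosSemidef.zero hγA.2
    have hsum := hb1.add hb2
    rwa [Matrix.fromBlocks_add, add_zero, add_zero, add_zero, ← hKH,
      show toC A - toC γA + (toC γA - Complex.I • toC (_root_.J n)) =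
        toC A - Complex.I • toC (_root_.J n) by abel] at hsum
  have hschur := schur_psd (pinvC_herm hQH) (pinvC_mul_self _) hblock
  refine ⟨?_, ?_, ?_⟩
  · show (A - reM (Xmap A C))ᵀ = A - reM (Xmap A C)
    rw [Matrix.transpose_sub, hs.eq, reM_symm hXH]
  · show (-(imM (Xmap A C)))ᵀ = -(-(imM (Xmap A C)))
    rw [Matrix.transpose_neg, imM_antisymm hXH, neg_neg]
  · show (toC (A - reM (Xmap A C)) - toC γA + Complex.I • toC (-(imM (Xmap A C)))).PosSemidef
    rw [key_eq]
    have heq : toC A - toC γA - Xmap A C =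
        toC A - toC γA - toC C * pinvC (toC A - Complex.I • toC (_root_.J n)) * (toC C)ᴴ := by
      rw [toC_conjT]; rfl
    rw [heq]
    exact hschur

end AuxSpecific

/-- The base case. -/
lemma good_base {n m : ℕ} {A0 : Matrix (Fin (2*n)) (Fin (2*n)) ℝ}
    {B0 : Matrix (Fin (2*m)) (Fin (2*m)) ℝ} {C0 : Matrix (Fin (2*n)) (Fin (2*m)) ℝ}
    {γA : Matrix (Fin (2*n)) (Fin (2*n)) ℝ} {γB : Matrix (Fin (2*m)) (Fin (2*m)) ℝ}
    (hA0 : A0.IsSymm) (hB0 : B0.IsSymm) (hγA : IsCM γA) (hγB : IsCM γB)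
    (hPos : (Matrix.fromBlocks A0 C0 C0ᵀ B0 - Matrix.fromBlocks γA 0 0 γB).PosSemidef) :
    Good γA (nextA A0 B0 C0, nextC B0 C0) := by
  have hCpsd := posSemidef_map_ofReal' hPos
  have hb2 : (Matrix.fromBlocks (0 : Matrix (Fin (2*n)) (Fin (2*n)) ℂ) 0 0
      (toC γB - Complex.I • toC (_root_.J m))).PosSemidef :=
    fromBlocks_diag_posSemidef Matrix.PosSemidef.zero hγB.2
  have hsum := hCpsd.add hb2
  have heq : (Matrix.fromBlocks A0 C0 C0ᵀ B0 - Matrix.fromBlocks γA 0 0 γB).map Complex.ofReal +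
      Matrix.fromBlocks 0 0 0 (toC γB - Complex.I • toC (_root_.J m)) =
      Matrix.fromBlocks (toC A0 - toC γA) (toC C0) ((toC C0)ᴴ)
        (toC B0 - Complex.I • toC (_root_.J m)) := by
    ext i j
    rcases i with i | i <;> rcases j with j | j <;>
      (simp [toC, Matrix.map_apply, Matrix.sub_apply, Matrix.add_apply, Matrix.fromBlocks,
        Matrix.smul_apply, Matrix.conjTranspose_apply]; try push_cast) <;> try ring
  rw [heq] at hsum
  have hXH : (Xmap B0 C0)ᴴ = Xmap B0 C0 := Xmap_herm hB0 C0
  have hschur := schur_psd (pinvC_herm (herm_AiJ hB0)) (pinvC_mul_self _) hsum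
  refine ⟨?_, ?_, ?_⟩
  · show (A0 - reM (Xmap B0 C0))ᵀ = A0 - reM (Xmap B0 C0)
    rw [Matrix.transpose_sub, hA0.eq, reM_symm hXH]
  · show (-(imM (Xmap B0 C0)))ᵀ = -(-(imM (Xmap B0 C0)))
    rw [Matrix.transpose_neg, imM_antisymm hXH, neg_neg]
  · show (toC (A0 - reM (Xmap B0 C0)) - toC γA +
      Complex.I • toC (-(imM (Xmap B0 C0)))).PosSemidef
    rw [key_eq]
    have heq2 : toC A0 - toC γA - Xmap B0 C0 =
        toC A0 - toC γA - toC C0 * pinvC (toC B0 - Complex.I • toC (_root_.J m)) * (toC C0)ᴴ := by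
      rw [toC_conjT]; rfl
    rw [heq2]
    exact hschur

/-- Theorem 1, part 1: if for some `N ≥ 1` the block `A_N` satisfies
`A_N − iJₙ ≱ 0`, then `γ_0` is not separable.  (`(seq A0 B0 C0 N).1 = A_{N+1}`.) -/
theorem criterion_inseparable {n m : ℕ}
    (A0 : Matrix (Fin (2*n)) (Fin (2*n)) ℝ) (B0 : Matrix (Fin (2*m)) (Fin (2*m)) ℝ)
    (C0 : Matrix (Fin (2*n)) (Fin (2*m)) ℝ)
    (hγ0 : IsCM2 (Matrix.fromBlocks A0 C0 C0ᵀ B0))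
    (hN : ∃ N : ℕ, ¬ (toC (seq A0 B0 C0 N).1 - Complex.I • toC (J n)).PosSemidef) :
    ¬ SepCM (Matrix.fromBlocks A0 C0 C0ᵀ B0) := by
  intro hSep
  obtain ⟨γA, γB, hγA, hγB, hPos⟩ := hSep
  obtain ⟨N, hbad⟩ := hN
  obtain ⟨hA0s, -, -, hB0s⟩ := Matrix.isSymm_fromBlocks_iff.mp hγ0.1
  have hGood : ∀ N, Good γA (seq A0 B0 C0 N) := by
    intro N
    induction N with
    | zero =>
      simp only [seq]
      rw [if_pos hγ0]
      exact good_base hA0s hB0s hγA hγB hPos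
    | succ k ih =>
      have hcm2 := good_cm2 hγA ih
      simp only [seq]
      rw [if_pos hcm2]
      exact good_step hγA ih
  exact hbad (cm2_block (good_cm2 hγA (hGood N)))
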